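/- For even n, b_4(n) ≤ 2·b_4(n/2) + h(n/2, n/2) + 2·b_3(n/2), where b_r(n) is the odd cover number of K_n^(r) and h is the product odd cover number. More generally the same holds covering K_n^(4) by splitting the vertex set into two equal halves and odd-covering the 4-sets by their intersection pattern with the halves. -/
import Mathlib


open Finset

/-- `e` is an edge of the complete `r`-partite `r`-graph with parts `P 0, ..., P (r-1)`:
it meets every part in exactly one vertex. -/
def IsEdge {α : Type*} [DecidableEq α] {r : ℕ} (P : Fin r → Finset α) (e : Finset α) : Prop :=
  ∀ i, (e ∩ P i).card = 1

instance {α : Type*} [DecidableEq α] {r : ℕ} (P : Fin r → Finset α) (e : Finset α) :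
    Decidable (IsEdge P e) :=
  inferInstanceAs (Decidable (∀ _, _))

/-- The family `H` of complete `r`-partite `r`-graphs (each given by `r` pairwise disjoint
parts inside `V`) is an odd cover of the complete `r`-graph on `V`: every `r`-subset of `V`
is an edge of an odd number of members. -/
def IsOddCoverOn {α : Type*} [DecidableEq α] (V : Finset α) {r m : ℕ}
    (H : Fin m → Fin r → Finset α) : Prop :=
  (∀ i j, H i j ⊆ V) ∧
  (∀ i, Pairwise (Function.onFun Disjoint (H i))) ∧
  ∀ e ⊆ V, e.card = r → Odd ((Finset.univ.filter fun i => IsEdge (H i) e)).card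

/-- `oddCoverNumber r n` is the odd cover number `b_r(n)` of `K_n^(r)`. -/
noncomputable def oddCoverNumber (r n : ℕ) : ℕ :=
  sInf {m | ∃ H : Fin m → Fin r → Finset (Fin n), IsOddCoverOn Finset.univ H}

/-- `h(m,n)`: the minimum number of products of complete bipartite graphs needed so that each
element of `E(K_m) × E(K_n)` belongs to an odd number of them. -/
noncomputable def prodOddCoverNumber (m n : ℕ) : ℕ :=
  sInf {s | ∃ P : Fin s → ((Fin 2 → Finset (Fin m)) × (Fin 2 → Finset (Fin n))),
    (∀ i, Pairwise (Function.onFun Disjoint (P i).1) ∧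
          Pairwise (Function.onFun Disjoint (P i).2)) ∧
    ∀ e : Finset (Fin m), ∀ f : Finset (Fin n), e.card = 2 → f.card = 2 →
      Odd ((Finset.univ.filter fun i => IsEdge (P i).1 e ∧ IsEdge (P i).2 f).card)}


section Half
variable {t : ℕ}

def fa (t : ℕ) : Fin t → Fin (t + t) := fun i => ⟨i.1, by omega⟩
def fb (t : ℕ) : Fin t → Fin (t + t) := fun i => ⟨t + i.1, by omega⟩

lemma fa_inj : Function.Injective (fa t) := fun i j h => by
  apply Fin.ext; simpa [fa, Fin.ext_iff] using h

lemma fb_inj : Function.Injective (fb t) := fun i j h => by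
  apply Fin.ext; simp only [fb, Fin.mk.injEq] at h; omega

def mA (t : ℕ) (s : Finset (Fin t)) : Finset (Fin (t + t)) := s.image (fa t)
def mB (t : ℕ) (s : Finset (Fin t)) : Finset (Fin (t + t)) := s.image (fb t)

def eA (t : ℕ) (e : Finset (Fin (t + t))) : Finset (Fin t) := univ.filter fun i => fa t i ∈ e
def eB (t : ℕ) (e : Finset (Fin (t + t))) : Finset (Fin t) := univ.filter fun i => fb t i ∈ e

lemma inter_mA (e : Finset (Fin (t + t))) (s : Finset (Fin t)) :
    e ∩ mA t s = mA t (eA t e ∩ s) := by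
  ext x
  simp only [mA, eA, mem_inter, mem_image, mem_filter, mem_univ, true_and]
  constructor
  · rintro ⟨hxe, i, his, rfl⟩; exact ⟨i, ⟨hxe, his⟩, rfl⟩
  · rintro ⟨i, ⟨hie, his⟩, rfl⟩; exact ⟨hie, i, his, rfl⟩

lemma inter_mB (e : Finset (Fin (t + t))) (s : Finset (Fin t)) :
    e ∩ mB t s = mB t (eB t e ∩ s) := by
  ext x
  simp only [mB, eB, mem_inter, mem_image, mem_filter, mem_univ, true_and]
  constructor
  · rintro ⟨hxe, i, his, rfl⟩; exact ⟨i, ⟨hxe, his⟩, rfl⟩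
  · rintro ⟨i, ⟨hie, his⟩, rfl⟩; exact ⟨hie, i, his, rfl⟩

lemma card_inter_mA (e : Finset (Fin (t + t))) (s : Finset (Fin t)) :
    (e ∩ mA t s).card = (eA t e ∩ s).card := by
  rw [inter_mA, mA, Finset.card_image_of_injective _ fa_inj]

lemma card_inter_mB (e : Finset (Fin (t + t))) (s : Finset (Fin t)) :
    (e ∩ mB t s).card = (eB t e ∩ s).card := by
  rw [inter_mB, mB, Finset.card_image_of_injective _ fb_inj]

lemma disjoint_mA_mA {u v : Finset (Fin t)} (h : Disjoint u v) :
    Disjoint (mA t u) (mA t v) := (Finset.disjoint_image fa_inj).mpr h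

lemma disjoint_mB_mB {u v : Finset (Fin t)} (h : Disjoint u v) :
    Disjoint (mB t u) (mB t v) := (Finset.disjoint_image fb_inj).mpr h

lemma disjoint_mA_mB (u v : Finset (Fin t)) : Disjoint (mA t u) (mB t v) := by
  rw [Finset.disjoint_left]
  rintro x hx hy
  simp only [mA, mB, mem_image] at hx hy
  obtain ⟨i, -, rfl⟩ := hx
  obtain ⟨j, -, hj⟩ := hy
  have : t + j.1 = i.1 := congrArg Fin.val hj
  omega

lemma card_eA_add_eB (e : Finset (Fin (t + t))) :
    (eA t e).card + (eB t e).card = e.card := by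
  have h1 : mA t (eA t e) = e.filter fun x => x.1 < t := by
    ext x
    simp only [mA, eA, mem_image, mem_filter, mem_univ, true_and]
    constructor
    · rintro ⟨i, hie, rfl⟩; exact ⟨hie, i.2⟩
    · rintro ⟨hxe, hxt⟩; exact ⟨⟨x.1, hxt⟩, by simpa [fa, Fin.ext_iff] using hxe, by simp [fa]⟩
  have h2 : mB t (eB t e) = e.filter fun x => ¬ x.1 < t := by
    ext x
    simp only [mB, eB, mem_image, mem_filter, mem_univ, true_and]
    constructor
    · rintro ⟨i, hie, rfl⟩; exact ⟨hie, by simp [fb]⟩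
    · rintro ⟨hxe, hxt⟩
      refine ⟨⟨x.1 - t, by omega⟩, ?_, ?_⟩
      · convert hxe using 2; simp [fb, Fin.ext_iff]; omega
      · simp [fb, Fin.ext_iff]; omega
  have c1 : (eA t e).card = (e.filter fun x => x.1 < t).card := by
    rw [← h1, mA, Finset.card_image_of_injective _ fa_inj]
  have c2 : (eB t e).card = (e.filter fun x => ¬ x.1 < t).card := by
    rw [← h2, mB, Finset.card_image_of_injective _ fb_inj]
  rw [c1, c2, Finset.card_filter_add_card_filter_not]

end Half

section Quad
variable {α : Type*} [DecidableEq α]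

def quad (a b c d : Finset α) : Fin 4 → Finset α :=
  fun j => if j = 0 then a else if j = 1 then b else if j = 2 then c else d

lemma quad_zero (a b c d : Finset α) : quad a b c d 0 = a := rfl
lemma quad_one (a b c d : Finset α) : quad a b c d 1 = b := rfl
lemma quad_two (a b c d : Finset α) : quad a b c d 2 = c := rfl
lemma quad_three (a b c d : Finset α) : quad a b c d 3 = d := rfl

lemma isEdge_quad {a b c d : Finset α} {e : Finset α} :
    IsEdge (quad a b c d) e ↔
      (e ∩ a).card = 1 ∧ (e ∩ b).card = 1 ∧ (e ∩ c).card = 1 ∧ (e ∩ d).card = 1 := by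
  constructor
  · intro h; exact ⟨h 0, h 1, h 2, h 3⟩
  · rintro ⟨h0, h1, h2, h3⟩ j
    fin_cases j
    · exact h0
    · exact h1
    · exact h2
    · exact h3

lemma quad_pairwise {a b c d : Finset α} (hab : Disjoint a b) (hac : Disjoint a c)
    (had : Disjoint a d) (hbc : Disjoint b c) (hbd : Disjoint b d) (hcd : Disjoint c d) :
    Pairwise (Function.onFun Disjoint (quad a b c d)) := by
  intro i j hij
  fin_cases i <;> fin_cases j <;>
    first
      | exact absurd rfl hij
      | assumption
      | exact hab.symm
      | exact hac.symm
      | exact had.symm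
      | exact hbc.symm
      | exact hbd.symm
      | exact hcd.symm

lemma isEdge_fin2 {Q : Fin 2 → Finset α} {e : Finset α} :
    IsEdge Q e ↔ (e ∩ Q 0).card = 1 ∧ (e ∩ Q 1).card = 1 := by
  constructor
  · intro h; exact ⟨h 0, h 1⟩
  · rintro ⟨h0, h1⟩ j; fin_cases j
    · exact h0
    · exact h1

lemma isEdge_fin3 {Q : Fin 3 → Finset α} {e : Finset α} :
    IsEdge Q e ↔ (e ∩ Q 0).card = 1 ∧ (e ∩ Q 1).card = 1 ∧ (e ∩ Q 2).card = 1 := by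
  constructor
  · intro h; exact ⟨h 0, h 1, h 2⟩
  · rintro ⟨h0, h1, h2⟩ j; fin_cases j
    · exact h0
    · exact h1
    · exact h2

lemma card_le_of_isEdge {r : ℕ} {Q : Fin r → Finset α}
    (hd : Pairwise (Function.onFun Disjoint Q)) {e : Finset α} (h : IsEdge Q e) :
    r ≤ e.card := by
  classical
  have hcard : (Finset.univ.biUnion fun j => e ∩ Q j).card = r := by
    rw [Finset.card_biUnion]
    · rw [Finset.sum_congr rfl (fun j _ => h j)]; simp
    · intro i _ j _ hij
      exact (hd hij).mono Finset.inter_subset_right Finset.inter_subset_right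
  rw [← hcard]
  apply Finset.card_le_card
  intro x hx
  simp only [Finset.mem_biUnion] at hx
  obtain ⟨j, -, hj⟩ := hx
  exact (Finset.mem_inter.mp hj).1

end Quad

lemma filter_sum_card {α β : Type*} [Fintype α] [Fintype β] (p : α ⊕ β → Prop) [DecidablePred p] :
    (univ.filter p).card
      = (univ.filter fun a => p (.inl a)).card + (univ.filter fun b => p (.inr b)).card := by
  have : univ.filter p = (univ.filter fun a => p (.inl a)).disjSum (univ.filter fun b => p (.inr b)) := by
    ext x; cases x <;> simp [Finset.mem_disjSum]
  rw [this, Finset.card_disjSum]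

lemma filter_equiv_card {α β : Type*} [Fintype α] [Fintype β] (eqv : α ≃ β)
    (p : β → Prop) [DecidablePred p] :
    (univ.filter fun a => p (eqv a)).card = (univ.filter p).card := by
  apply Finset.card_bij (fun a _ => eqv a)
  · intro a ha; simp_all
  · intro a _ b _ h; exact eqv.injective h
  · intro b hb; exact ⟨eqv.symm b, by simp_all, by simp⟩


section Nonempty

lemma inter_singleton_card_one {α : Type*} [DecidableEq α] (f : Finset α) (x : α) :
    (f ∩ {x}).card = 1 ↔ x ∈ f := by
  by_cases h : x ∈ f
  · simp [Finset.inter_singleton_of_mem h, h]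
  · simp [h]

noncomputable def canonParts {k : ℕ} (r : ℕ) (e : Finset (Fin k)) : Fin r → Finset (Fin k) :=
  if he : e.card = r then fun j => {(e.orderIsoOfFin he j : Fin k)} else fun _ => ∅

lemma canonParts_pairwise {k r : ℕ} (e : Finset (Fin k)) :
    Pairwise (Function.onFun Disjoint (canonParts r e)) := by
  intro i j hij
  unfold Function.onFun canonParts
  split
  · next he =>
    simp only [Finset.disjoint_singleton_left, Finset.mem_singleton]
    intro hco
    exact hij ((e.orderIsoOfFin he).injective (Subtype.ext hco))
  · simp

lemma isEdge_canonParts {k r : ℕ} {e f : Finset (Fin k)} (he : e.card = r) (hf : f.card = r) :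
    IsEdge (canonParts r e) f ↔ f = e := by
  have himg : ∀ j, canonParts r e j = {((e.orderIsoOfFin he) j : Fin k)} := by
    intro j; unfold canonParts; rw [dif_pos he]
  constructor
  · intro h
    have hsub : e ⊆ f := by
      intro x hx
      have hj := h ((e.orderIsoOfFin he).symm ⟨x, hx⟩)
      rw [himg, inter_singleton_card_one] at hj
      simpa using hj
    exact (Finset.eq_of_subset_of_card_le hsub (by omega)).symm
  · intro hfe j
    rw [himg, inter_singleton_card_one, hfe]
    exact ((e.orderIsoOfFin he) j).2

lemma oddCover_set_nonempty (r k : ℕ) :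
    {m | ∃ H : Fin m → Fin r → Finset (Fin k), IsOddCoverOn Finset.univ H}.Nonempty := by
  classical
  set S : Finset (Finset (Fin k)) := Finset.univ.powersetCard r with hS
  refine ⟨S.card, fun i => canonParts r (S.equivFin.symm i).1, fun _ _ => Finset.subset_univ _,
    fun i => canonParts_pairwise _, fun e _ hcard => ?_⟩
  have heS : e ∈ S := by simp [hS, Finset.mem_powersetCard, hcard]
  have : (Finset.univ.filter fun i => IsEdge (canonParts r (S.equivFin.symm i).1) e)
      = {S.equivFin ⟨e, heS⟩} := by
    ext i
    simp only [Finset.mem_filter, Finset.mem_univ, true_and, Finset.mem_singleton]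
    have hcard' : ((S.equivFin.symm i : S) : Finset (Fin k)).card = r :=
      (Finset.mem_powersetCard.mp (S.equivFin.symm i).2).2
    rw [isEdge_canonParts hcard' hcard]
    constructor
    · intro h
      have : S.equivFin.symm i = ⟨e, heS⟩ := Subtype.ext h.symm
      rw [← this]; simp
    · rintro rfl; simp
  rw [this]
  simp

lemma prodOddCover_set_nonempty (m n : ℕ) :
    {s | ∃ P : Fin s → ((Fin 2 → Finset (Fin m)) × (Fin 2 → Finset (Fin n))),
    (∀ i, Pairwise (Function.onFun Disjoint (P i).1) ∧
          Pairwise (Function.onFun Disjoint (P i).2)) ∧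
    ∀ e : Finset (Fin m), ∀ f : Finset (Fin n), e.card = 2 → f.card = 2 →
      Odd ((Finset.univ.filter fun i => IsEdge (P i).1 e ∧ IsEdge (P i).2 f).card)}.Nonempty := by
  classical
  set S : Finset (Finset (Fin m) × Finset (Fin n)) :=
    (Finset.univ.powersetCard 2) ×ˢ (Finset.univ.powersetCard 2) with hS
  refine ⟨S.card, fun i =>
      (canonParts 2 (S.equivFin.symm i).1.1, canonParts 2 (S.equivFin.symm i).1.2),
    fun i => ⟨canonParts_pairwise _, canonParts_pairwise _⟩, fun e f he hf => ?_⟩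
  have heS : (e, f) ∈ S := by
    simp [hS, Finset.mem_product, Finset.mem_powersetCard, he, hf]
  have : (Finset.univ.filter fun i =>
      IsEdge (canonParts 2 (S.equivFin.symm i).1.1) e ∧
      IsEdge (canonParts 2 (S.equivFin.symm i).1.2) f) = {S.equivFin ⟨(e, f), heS⟩} := by
    ext i
    simp only [Finset.mem_filter, Finset.mem_univ, true_and, Finset.mem_singleton]
    obtain ⟨h1, h2⟩ := Finset.mem_product.mp (S.equivFin.symm i).2
    have hc1 := (Finset.mem_powersetCard.mp h1).2
    have hc2 := (Finset.mem_powersetCard.mp h2).2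
    rw [isEdge_canonParts hc1 he, isEdge_canonParts hc2 hf]
    constructor
    · rintro ⟨hh1, hh2⟩
      have : S.equivFin.symm i = ⟨(e, f), heS⟩ := Subtype.ext (Prod.ext hh1.symm hh2.symm)
      rw [← this]; simp
    · rintro rfl; simp
  rw [this]
  simp

end Nonempty


lemma isEdge_mA {t r : ℕ} {Q : Fin r → Finset (Fin t)} {e : Finset (Fin (t + t))} :
    IsEdge (fun j => mA t (Q j)) e ↔ IsEdge Q (eA t e) := by
  unfold IsEdge
  exact forall_congr' fun j => by rw [card_inter_mA]

lemma isEdge_mB {t r : ℕ} {Q : Fin r → Finset (Fin t)} {e : Finset (Fin (t + t))} :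
    IsEdge (fun j => mB t (Q j)) e ↔ IsEdge Q (eB t e) := by
  unfold IsEdge
  exact forall_congr' fun j => by rw [card_inter_mB]

/-- For even `n`, `b_4(n) ≤ 2·b_4(n/2) + h(n/2, n/2) + 2·b_3(n/2)`. -/
theorem stmt15 (n : ℕ) (hn : Even n) :
    oddCoverNumber 4 n ≤
      2 * oddCoverNumber 4 (n / 2) + prodOddCoverNumber (n / 2) (n / 2) +
        2 * oddCoverNumber 3 (n / 2) := by
  classical
  obtain ⟨t, rfl⟩ := hn
  have h2 : (t + t) / 2 = t := by omega
  rw [h2]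
  set m4 := oddCoverNumber 4 t with hm4
  set m3 := oddCoverNumber 3 t with hm3
  set sP := prodOddCoverNumber t t with hsP
  have h4 : ∃ H : Fin (oddCoverNumber 4 t) → Fin 4 → Finset (Fin t),
      IsOddCoverOn Finset.univ H := Nat.sInf_mem (oddCover_set_nonempty 4 t)
  have h3 : ∃ H : Fin (oddCoverNumber 3 t) → Fin 3 → Finset (Fin t),
      IsOddCoverOn Finset.univ H := Nat.sInf_mem (oddCover_set_nonempty 3 t)
  have hp : ∃ P : Fin (prodOddCoverNumber t t) →
      ((Fin 2 → Finset (Fin t)) × (Fin 2 → Finset (Fin t))),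
      (∀ i, Pairwise (Function.onFun Disjoint (P i).1) ∧
            Pairwise (Function.onFun Disjoint (P i).2)) ∧
      ∀ e : Finset (Fin t), ∀ f : Finset (Fin t), e.card = 2 → f.card = 2 →
        Odd ((Finset.univ.filter fun i => IsEdge (P i).1 e ∧ IsEdge (P i).2 f).card) :=
    Nat.sInf_mem (prodOddCover_set_nonempty t t)
  obtain ⟨HA, -, HAdisj, HAcount⟩ := h4
  obtain ⟨G, -, Gdisj, Gcount⟩ := h3
  obtain ⟨P, Pdisj, Pcount⟩ := hp
  set HH : ((Fin m4 ⊕ Fin m4) ⊕ (Fin sP ⊕ (Fin m3 ⊕ Fin m3))) → Fin 4 → Finset (Fin (t + t)) :=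
    Sum.elim
      (Sum.elim (fun i j => mA t (HA i j)) (fun i j => mB t (HA i j)))
      (Sum.elim
        (fun i => quad (mA t ((P i).1 0)) (mA t ((P i).1 1))
                       (mB t ((P i).2 0)) (mB t ((P i).2 1)))
        (Sum.elim
          (fun i => quad (mA t (G i 0)) (mA t (G i 1)) (mA t (G i 2)) (mB t Finset.univ))
          (fun i => quad (mB t (G i 0)) (mB t (G i 1)) (mB t (G i 2)) (mA t Finset.univ))))
    with hHH
  have hdisj : ∀ x : (Fin m4 ⊕ Fin m4) ⊕ (Fin sP ⊕ (Fin m3 ⊕ Fin m3)), Pairwise (Function.onFun Disjoint (HH x)) := by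
    rintro ((i | i) | (i | (i | i)))
    · intro j j' h; exact disjoint_mA_mA (HAdisj i h)
    · intro j j' h; exact disjoint_mB_mB (HAdisj i h)
    · exact quad_pairwise (disjoint_mA_mA ((Pdisj i).1 (by decide)))
        (disjoint_mA_mB _ _) (disjoint_mA_mB _ _) (disjoint_mA_mB _ _) (disjoint_mA_mB _ _)
        (disjoint_mB_mB ((Pdisj i).2 (by decide)))
    · exact quad_pairwise (disjoint_mA_mA (Gdisj i (by decide)))
        (disjoint_mA_mA (Gdisj i (by decide))) (disjoint_mA_mB _ _)
        (disjoint_mA_mA (Gdisj i (by decide))) (disjoint_mA_mB _ _) (disjoint_mA_mB _ _)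
    · exact quad_pairwise (disjoint_mB_mB (Gdisj i (by decide)))
        (disjoint_mB_mB (Gdisj i (by decide))) ((disjoint_mA_mB _ _).symm)
        (disjoint_mB_mB (Gdisj i (by decide))) ((disjoint_mA_mB _ _).symm)
        ((disjoint_mA_mB _ _).symm)
  have hcount : ∀ e : Finset (Fin (t + t)), e.card = 4 →
      Odd ((Finset.univ.filter
        fun x : (Fin m4 ⊕ Fin m4) ⊕ (Fin sP ⊕ (Fin m3 ⊕ Fin m3)) => IsEdge (HH x) e).card) := by
    intro e he
    have hab : (eA t e).card + (eB t e).card = 4 := by rw [card_eA_add_eB]; exact he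
    have E1 : ∀ i, IsEdge (HH (Sum.inl (Sum.inl i))) e ↔ IsEdge (HA i) (eA t e) := by
      intro i
      rw [show IsEdge (HH (Sum.inl (Sum.inl i))) e ↔ IsEdge (fun j => mA t (HA i j)) e from
        Iff.rfl, isEdge_mA]
    have E2 : ∀ i, IsEdge (HH (Sum.inl (Sum.inr i))) e ↔ IsEdge (HA i) (eB t e) := by
      intro i
      rw [show IsEdge (HH (Sum.inl (Sum.inr i))) e ↔ IsEdge (fun j => mB t (HA i j)) e from
        Iff.rfl, isEdge_mB]
    have E3 : ∀ i, IsEdge (HH (Sum.inr (Sum.inl i))) e ↔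
        (IsEdge ((P i).1) (eA t e) ∧ IsEdge ((P i).2) (eB t e)) := by
      intro i
      rw [show IsEdge (HH (Sum.inr (Sum.inl i))) e ↔
          IsEdge (quad (mA t ((P i).1 0)) (mA t ((P i).1 1))
            (mB t ((P i).2 0)) (mB t ((P i).2 1))) e from Iff.rfl,
        isEdge_quad, card_inter_mA, card_inter_mA, card_inter_mB, card_inter_mB,
        isEdge_fin2, isEdge_fin2]
      tauto
    have E4 : ∀ i, IsEdge (HH (Sum.inr (Sum.inr (Sum.inl i)))) e ↔
        (IsEdge (G i) (eA t e) ∧ (eB t e).card = 1) := by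
      intro i
      rw [show IsEdge (HH (Sum.inr (Sum.inr (Sum.inl i)))) e ↔
          IsEdge (quad (mA t (G i 0)) (mA t (G i 1)) (mA t (G i 2)) (mB t Finset.univ)) e from
          Iff.rfl,
        isEdge_quad, card_inter_mA, card_inter_mA, card_inter_mA, card_inter_mB,
        Finset.inter_univ, isEdge_fin3]
      tauto
    have E5 : ∀ i, IsEdge (HH (Sum.inr (Sum.inr (Sum.inr i)))) e ↔
        (IsEdge (G i) (eB t e) ∧ (eA t e).card = 1) := by
      intro i
      rw [show IsEdge (HH (Sum.inr (Sum.inr (Sum.inr i)))) e ↔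
          IsEdge (quad (mB t (G i 0)) (mB t (G i 1)) (mB t (G i 2)) (mA t Finset.univ)) e from
          Iff.rfl,
        isEdge_quad, card_inter_mB, card_inter_mB, card_inter_mB, card_inter_mA,
        Finset.inter_univ, isEdge_fin3]
      tauto
    rcases (show (eA t e).card = 0 ∨ (eA t e).card = 1 ∨ (eA t e).card = 2 ∨
        (eA t e).card = 3 ∨ (eA t e).card = 4 by omega) with ha | ha | ha | ha | ha
    · -- contributor: block 2 (all four vertices in B)
      have : (Finset.univ.filter fun x : (Fin m4 ⊕ Fin m4) ⊕ (Fin sP ⊕ (Fin m3 ⊕ Fin m3)) => IsEdge (HH x) e)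
          = (Finset.univ.filter fun i => IsEdge (HA i) (eB t e)).image
              (fun i => (Sum.inl (Sum.inr i) : (Fin m4 ⊕ Fin m4) ⊕ (Fin sP ⊕ (Fin m3 ⊕ Fin m3)))) := by
        ext x
        simp only [Finset.mem_filter, Finset.mem_univ, true_and, Finset.mem_image]
        constructor
        · rintro hx
          rcases x with ((i | i) | (i | (i | i)))
          · have := card_le_of_isEdge (HAdisj i) ((E1 i).mp hx); omega
          · exact ⟨i, (E2 i).mp hx, rfl⟩
          · have := card_le_of_isEdge (Pdisj i).1 ((E3 i).mp hx).1; omega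
          · have := ((E4 i).mp hx).2; omega
          · have := ((E5 i).mp hx).2; omega
        · rintro ⟨i, hi, rfl⟩; exact (E2 i).mpr hi
      rw [this, Finset.card_image_of_injective _ (fun a b h => by simpa using h)]
      exact HAcount _ (Finset.subset_univ _) (by omega)
    · -- contributor: block 5
      have : (Finset.univ.filter fun x : (Fin m4 ⊕ Fin m4) ⊕ (Fin sP ⊕ (Fin m3 ⊕ Fin m3)) => IsEdge (HH x) e)
          = (Finset.univ.filter fun i => IsEdge (G i) (eB t e)).image
              (fun i => (Sum.inr (Sum.inr (Sum.inr i)) : (Fin m4 ⊕ Fin m4) ⊕ (Fin sP ⊕ (Fin m3 ⊕ Fin m3)))) := by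
        ext x
        simp only [Finset.mem_filter, Finset.mem_univ, true_and, Finset.mem_image]
        constructor
        · rintro hx
          rcases x with ((i | i) | (i | (i | i)))
          · have := card_le_of_isEdge (HAdisj i) ((E1 i).mp hx); omega
          · have := card_le_of_isEdge (HAdisj i) ((E2 i).mp hx); omega
          · have := card_le_of_isEdge (Pdisj i).1 ((E3 i).mp hx).1; omega
          · have := ((E4 i).mp hx).2; omega
          · exact ⟨i, ((E5 i).mp hx).1, rfl⟩
        · rintro ⟨i, hi, rfl⟩; exact (E5 i).mpr ⟨hi, ha⟩
      rw [this, Finset.card_image_of_injective _ (fun a b h => by simpa using h)]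
      exact Gcount _ (Finset.subset_univ _) (by omega)
    · -- contributor: block 3
      have : (Finset.univ.filter fun x : (Fin m4 ⊕ Fin m4) ⊕ (Fin sP ⊕ (Fin m3 ⊕ Fin m3)) => IsEdge (HH x) e)
          = (Finset.univ.filter fun i =>
              IsEdge ((P i).1) (eA t e) ∧ IsEdge ((P i).2) (eB t e)).image
              (fun i => (Sum.inr (Sum.inl i) : (Fin m4 ⊕ Fin m4) ⊕ (Fin sP ⊕ (Fin m3 ⊕ Fin m3)))) := by
        ext x
        simp only [Finset.mem_filter, Finset.mem_univ, true_and, Finset.mem_image]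
        constructor
        · rintro hx
          rcases x with ((i | i) | (i | (i | i)))
          · have := card_le_of_isEdge (HAdisj i) ((E1 i).mp hx); omega
          · have := card_le_of_isEdge (HAdisj i) ((E2 i).mp hx); omega
          · exact ⟨i, (E3 i).mp hx, rfl⟩
          · have := ((E4 i).mp hx).2; omega
          · have := ((E5 i).mp hx).2; omega
        · rintro ⟨i, hi, rfl⟩; exact (E3 i).mpr hi
      rw [this, Finset.card_image_of_injective _ (fun a b h => by simpa using h)]
      exact Pcount _ _ (by omega) (by omega)
    · -- contributor: block 4
      have : (Finset.univ.filter fun x : (Fin m4 ⊕ Fin m4) ⊕ (Fin sP ⊕ (Fin m3 ⊕ Fin m3)) => IsEdge (HH x) e)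
          = (Finset.univ.filter fun i => IsEdge (G i) (eA t e)).image
              (fun i => (Sum.inr (Sum.inr (Sum.inl i)) : (Fin m4 ⊕ Fin m4) ⊕ (Fin sP ⊕ (Fin m3 ⊕ Fin m3)))) := by
        ext x
        simp only [Finset.mem_filter, Finset.mem_univ, true_and, Finset.mem_image]
        constructor
        · rintro hx
          rcases x with ((i | i) | (i | (i | i)))
          · have := card_le_of_isEdge (HAdisj i) ((E1 i).mp hx); omega
          · have := card_le_of_isEdge (HAdisj i) ((E2 i).mp hx); omega
          · have := card_le_of_isEdge (Pdisj i).2 ((E3 i).mp hx).2; omega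
          · exact ⟨i, ((E4 i).mp hx).1, rfl⟩
          · have := ((E5 i).mp hx).2; omega
        · rintro ⟨i, hi, rfl⟩; exact (E4 i).mpr ⟨hi, by omega⟩
      rw [this, Finset.card_image_of_injective _ (fun a b h => by simpa using h)]
      exact Gcount _ (Finset.subset_univ _) (by omega)
    · -- contributor: block 1
      have : (Finset.univ.filter fun x : (Fin m4 ⊕ Fin m4) ⊕ (Fin sP ⊕ (Fin m3 ⊕ Fin m3)) => IsEdge (HH x) e)
          = (Finset.univ.filter fun i => IsEdge (HA i) (eA t e)).image
              (fun i => (Sum.inl (Sum.inl i) : (Fin m4 ⊕ Fin m4) ⊕ (Fin sP ⊕ (Fin m3 ⊕ Fin m3)))) := by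
        ext x
        simp only [Finset.mem_filter, Finset.mem_univ, true_and, Finset.mem_image]
        constructor
        · rintro hx
          rcases x with ((i | i) | (i | (i | i)))
          · exact ⟨i, (E1 i).mp hx, rfl⟩
          · have := card_le_of_isEdge (HAdisj i) ((E2 i).mp hx); omega
          · have := card_le_of_isEdge (Pdisj i).2 ((E3 i).mp hx).2; omega
          · have := ((E4 i).mp hx).2; omega
          · have := ((E5 i).mp hx).2; omega
        · rintro ⟨i, hi, rfl⟩; exact (E1 i).mpr hi
      rw [this, Finset.card_image_of_injective _ (fun a b h => by simpa using h)]
      exact HAcount _ (Finset.subset_univ _) (by omega)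
  have hmem : Fintype.card ((Fin m4 ⊕ Fin m4) ⊕ (Fin sP ⊕ (Fin m3 ⊕ Fin m3))) ∈
      {m | ∃ H : Fin m → Fin 4 → Finset (Fin (t + t)), IsOddCoverOn Finset.univ H} := by
    refine ⟨fun i =>
        HH ((Fintype.equivFin ((Fin m4 ⊕ Fin m4) ⊕ (Fin sP ⊕ (Fin m3 ⊕ Fin m3)))).symm i),
      fun _ _ => Finset.subset_univ _, fun i => hdisj _, fun e _ he => ?_⟩
    have hcq := hcount e he
    convert hcq using 1
    exact filter_equiv_card
      (Fintype.equivFin ((Fin m4 ⊕ Fin m4) ⊕ (Fin sP ⊕ (Fin m3 ⊕ Fin m3)))).symm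
      (fun x => IsEdge (HH x) e)
  have hle : oddCoverNumber 4 (t + t) ≤
      Fintype.card ((Fin m4 ⊕ Fin m4) ⊕ (Fin sP ⊕ (Fin m3 ⊕ Fin m3))) := Nat.sInf_le hmem
  have hcard : Fintype.card ((Fin m4 ⊕ Fin m4) ⊕ (Fin sP ⊕ (Fin m3 ⊕ Fin m3)))
      = m4 + m4 + (sP + (m3 + m3)) := by
    simp [Fintype.card_sum]
  omega
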